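/- Fix 0 < τ < 1 and 1 < r < p < ∞. Let (n_k)_{k≥1} be a strictly increasing sequence of positive integers with n₁ = 1 and with the gaps n_{k+1} − n_k nondecreasing and tending to infinity; define ρ(i) = 0 if i = n_k for some k and ρ(i) = 1 otherwise, and let M := M_ρ. Let C_{M,1} denote the closed convex hull in the Banach space C([0,1]) of the closure of the set of functions { t ↦ M(λt)/M(λ) : 0 < λ < 1 }. Then every N ∈ C_{M,1} satisfies N(t) ≤ τ^{−2p} M(t) for all t ∈ [0,1]. -/

import Mathlib

open Finset in
/-- `M` is the Orlicz function `M_η` of Lindenstrauss–Tzafriri associated to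
`0 < τ < 1`, `1 < r < p < ∞` and a 0-1 sequence `η`: the continuous piecewise-linear
function on `[0,1]` with `M 0 = 0`, `M (τ^k) = τ^(rk + (p-r)·Σ_{n=1}^k η n)` for
`k ≥ 0` (in particular `M 1 = 1`), affine on each interval `[τ^(k+1), τ^k]`. -/
def IsMeta (τ r p : ℝ) (η : ℕ → ℝ) (M : ℝ → ℝ) : Prop :=
  M 0 = 0 ∧
  (∀ k : ℕ, M (τ ^ k) = τ ^ (r * (k : ℝ) + (p - r) * ∑ n ∈ Finset.Icc 1 k, η n)) ∧
  (∀ k : ℕ, ∀ x ∈ Set.Icc (τ ^ (k + 1)) (τ ^ k),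
    M x = M (τ ^ (k + 1)) +
      (x - τ ^ (k + 1)) * (M (τ ^ k) - M (τ ^ (k + 1))) / (τ ^ k - τ ^ (k + 1)))

private lemma nk_mono {nk : ℕ → ℕ} (hmono : ∀ k : ℕ, 1 ≤ k → nk k < nk (k + 1)) :
    ∀ a b : ℕ, 1 ≤ a → a ≤ b → nk a ≤ nk b := by
  intro a b ha hab
  induction b, hab using Nat.le_induction with
  | base => exact le_rfl
  | succ b hb ih => exact ih.trans (hmono b (ha.trans hb)).le

private lemma nk_smono {nk : ℕ → ℕ} (hmono : ∀ k : ℕ, 1 ≤ k → nk k < nk (k + 1)) :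
    ∀ a b : ℕ, 1 ≤ a → a < b → nk a < nk b := by
  intro a b ha hab
  induction b, hab using Nat.le_induction with
  | base => exact hmono a ha
  | succ b hb ih => exact ih.trans_le (hmono b (ha.trans (by omega))).le

private lemma nk_ge {nk : ℕ → ℕ} (hnk1 : nk 1 = 1)
    (hmono : ∀ k : ℕ, 1 ≤ k → nk k < nk (k + 1)) :
    ∀ m : ℕ, 1 ≤ m → m ≤ nk m := by
  intro m hm
  induction m, hm using Nat.le_induction with
  | base => omega
  | succ m hm ih => have := hmono m hm; omega

private lemma gapmono {nk : ℕ → ℕ}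
    (hmono : ∀ k : ℕ, 1 ≤ k → nk k < nk (k + 1))
    (hgap : ∀ k : ℕ, 1 ≤ k → nk (k + 1) - nk k ≤ nk (k + 2) - nk (k + 1)) :
    ∀ a b : ℕ, 1 ≤ a → a ≤ b → nk (a + 1) + nk b ≤ nk (b + 1) + nk a := by
  intro a b ha hab
  induction b, hab using Nat.le_induction with
  | base => omega
  | succ b hb ih =>
    have h1 := hgap b (ha.trans hb)
    have h2 := hmono b (ha.trans hb)
    have h3 := hmono (b+1) (by omega)
    have e1 : nk (b + 1 + 1) = nk (b + 2) := congrArg nk (by omega)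
    rw [e1]
    omega

private lemma gaplem {nk : ℕ → ℕ}
    (hmono : ∀ k : ℕ, 1 ≤ k → nk k < nk (k + 1))
    (hgap : ∀ k : ℕ, 1 ≤ k → nk (k + 1) - nk k ≤ nk (k + 2) - nk (k + 1)) :
    ∀ m : ℕ, 1 ≤ m → ∀ i : ℕ, nk (1 + i) + nk m ≤ nk (m + i) + nk 1 := by
  intro m hm i
  induction i with
  | zero => simp [Nat.add_comm]
  | succ i ih =>
    have h := gapmono hmono hgap (1 + i) (m + i) (by omega) (by omega)
    have e1 : 1 + (i + 1) = (1 + i) + 1 := by omega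
    have e2 : m + (i + 1) = (m + i) + 1 := by omega
    rw [e1, e2]
    omega

private lemma sum_super {nk : ℕ → ℕ} (hnk1 : nk 1 = 1)
    (hmono : ∀ k : ℕ, 1 ≤ k → nk k < nk (k + 1))
    (hgap : ∀ k : ℕ, 1 ≤ k → nk (k + 1) - nk k ≤ nk (k + 2) - nk (k + 1))
    {ρ : ℕ → ℝ} (hρ0 : ∀ k : ℕ, 1 ≤ k → ρ (nk k) = 0)
    (hρ1 : ∀ i : ℕ, (∀ k : ℕ, 1 ≤ k → nk k ≠ i) → ρ i = 1) (j k : ℕ) :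
    (∑ n ∈ Finset.Ioc 0 k, ρ n) ≤ ∑ n ∈ Finset.Ioc j (j + k), ρ n := by
  classical
  set P : ℕ → Prop := fun n => ∃ m, 1 ≤ m ∧ nk m = n with hPdef
  have hρ : ∀ n : ℕ, 1 ≤ n → ρ n = if P n then 0 else 1 := by
    intro n hn
    by_cases h : P n
    · obtain ⟨m, hm, hmn⟩ := h
      rw [if_pos (⟨m, hm, hmn⟩ : P n)]
      rw [← hmn]; exact hρ0 m hm
    · rw [if_neg h]
      exact hρ1 n (fun m hm hh => h ⟨m, hm, hh⟩)
  have hsum : ∀ a b : ℕ, (∑ n ∈ Finset.Ioc a b, ρ n)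
      = (((Finset.Ioc a b).filter (fun n => ¬ P n)).card : ℝ) := by
    intro a b
    rw [← Finset.sum_filter_add_sum_filter_not (Finset.Ioc a b) P ρ]
    have h0 : (∑ n ∈ (Finset.Ioc a b).filter P, ρ n) = 0 := by
      apply Finset.sum_eq_zero
      intro n hn
      simp only [Finset.mem_filter, Finset.mem_Ioc] at hn
      rw [hρ n (by omega), if_pos hn.2]
    have h1 : (∑ n ∈ (Finset.Ioc a b).filter (fun n => ¬ P n), ρ n)
        = (((Finset.Ioc a b).filter (fun n => ¬ P n)).card : ℝ) := by
      rw [Finset.sum_congr rfl (g := fun _ => (1:ℝ)) (fun n hn => ?_)]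
      · rw [Finset.sum_const, nsmul_eq_mul, mul_one]
      · simp only [Finset.mem_filter, Finset.mem_Ioc] at hn
        rw [hρ n (by omega), if_neg hn.2]
    rw [h0, h1, zero_add]
  -- core cardinality inequality
  have cardP : ((Finset.Ioc j (j + k)).filter P).card ≤ ((Finset.Ioc 0 k).filter P).card := by
    rcases ((Finset.Ioc j (j + k)).filter P).eq_empty_or_nonempty with h | hAne
    · simp [h]
    set T := (Finset.Icc 1 (j + k)).filter (fun m => nk m ∈ Finset.Ioc j (j + k)) with hT
    have hsurj : Set.SurjOn nk (T : Set ℕ) (((Finset.Ioc j (j + k)).filter P : Finset ℕ) : Set ℕ) := by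
      intro n hn
      simp only [Finset.coe_filter, Set.mem_setOf_eq, Finset.mem_Ioc] at hn
      obtain ⟨⟨hn1, hn2⟩, m, hm1, rfl⟩ := hn
      have hle := nk_ge hnk1 hmono m hm1
      refine ⟨m, ?_, rfl⟩
      simp only [hT, Finset.coe_filter, Set.mem_setOf_eq, Finset.mem_Icc, Finset.mem_Ioc]
      omega
    have h1 : ((Finset.Ioc j (j + k)).filter P).card ≤ T.card :=
      Finset.card_le_card_of_surjOn nk hsurj
    have hTne : T.Nonempty := by
      obtain ⟨n, hn⟩ := hAne
      obtain ⟨m, hm, -⟩ := hsurj (Finset.mem_coe.2 hn)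
      exact ⟨m, Finset.mem_coe.1 hm⟩
    set m0 := T.min' hTne with hm0def
    have hm0T : m0 ∈ T := T.min'_mem hTne
    have hm0facts : 1 ≤ m0 ∧ j + 1 ≤ nk m0 := by
      simp only [hT, Finset.mem_filter, Finset.mem_Icc, Finset.mem_Ioc] at hm0T
      omega
    have h2 : T.card ≤ ((Finset.Icc 1 k).filter (fun m => nk m ≤ k)).card := by
      apply Finset.card_le_card_of_injOn (fun m => m - m0 + 1)
      · intro m hmT
        have hmin : m0 ≤ m := T.min'_le m hmT
        simp only [Finset.mem_coe, hT, Finset.mem_filter, Finset.mem_Icc, Finset.mem_Ioc] at hmT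
        have hg := gaplem hmono hgap m0 hm0facts.1 (m - m0)
        have e1 : m0 + (m - m0) = m := by omega
        have e2 : 1 + (m - m0) = m - m0 + 1 := by omega
        rw [e1, e2] at hg
        have hnkge : m - m0 + 1 ≤ nk (m - m0 + 1) := nk_ge hnk1 hmono _ (by omega)
        simp only [Finset.mem_coe, Finset.mem_filter, Finset.mem_Icc]
        omega
      · intro a ha b hb hab
        have h1 := T.min'_le a (Finset.mem_coe.1 ha)
        have h2 := T.min'_le b (Finset.mem_coe.1 hb)
        simp only at hab
        omega
    have h3 : ((Finset.Icc 1 k).filter (fun m => nk m ≤ k)).card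
        ≤ ((Finset.Ioc 0 k).filter P).card := by
      apply Finset.card_le_card_of_injOn nk
      · intro m hm
        simp only [Finset.mem_coe, Finset.mem_filter, Finset.mem_Icc] at hm
        have hge : 1 ≤ nk m := by
          have := nk_ge hnk1 hmono m hm.1.1; omega
        simp only [Finset.mem_coe, Finset.mem_filter, Finset.mem_Ioc]
        exact ⟨⟨by omega, hm.2⟩, m, hm.1.1, rfl⟩
      · intro a ha b hb hab
        simp only [Finset.coe_filter, Set.mem_setOf_eq, Finset.mem_Icc] at ha hb
        by_contra hne
        rcases Nat.lt_or_ge a b with h | h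
        · exact absurd hab (nk_smono hmono a b ha.1.1 h).ne
        · have hlt : b < a := by omega
          exact absurd hab.symm (nk_smono hmono b a hb.1.1 hlt).ne
    omega
  -- conclude
  rw [hsum, hsum]
  have hc1 : ((Finset.Ioc 0 k).filter P).card + ((Finset.Ioc 0 k).filter (fun n => ¬ P n)).card
      = (Finset.Ioc 0 k).card := Finset.card_filter_add_card_filter_not P
  have hc2 : ((Finset.Ioc j (j + k)).filter P).card
      + ((Finset.Ioc j (j + k)).filter (fun n => ¬ P n)).card
      = (Finset.Ioc j (j + k)).card := Finset.card_filter_add_card_filter_not P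
  rw [Nat.card_Ioc] at hc1 hc2
  have : ((Finset.Ioc 0 k).filter (fun n => ¬ P n)).card
      ≤ ((Finset.Ioc j (j + k)).filter (fun n => ¬ P n)).card := by omega
  exact_mod_cast Nat.cast_le.2 this

private lemma genbound (τ r p : ℝ) (hτ0 : 0 < τ) (hτ1 : τ < 1) (hr : 1 < r) (hrp : r < p)
    (nk : ℕ → ℕ) (hnk1 : nk 1 = 1)
    (hmono : ∀ k : ℕ, 1 ≤ k → nk k < nk (k + 1))
    (hgap : ∀ k : ℕ, 1 ≤ k → nk (k + 1) - nk k ≤ nk (k + 2) - nk (k + 1))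
    (ρ : ℕ → ℝ)
    (hρ0 : ∀ k : ℕ, 1 ≤ k → ρ (nk k) = 0)
    (hρ1 : ∀ i : ℕ, (∀ k : ℕ, 1 ≤ k → nk k ≠ i) → ρ i = 1)
    (M : ℝ → ℝ) (hM : IsMeta τ r p ρ M)
    (lam t : ℝ) (hl0 : 0 < lam) (hl1 : lam < 1) (ht0 : 0 ≤ t) (ht1 : t ≤ 1) :
    M (lam * t) / M lam ≤ τ ^ (-(2 * p)) * M t := by
  classical
  set e : ℕ → ℝ := fun k => r * (k : ℝ) + (p - r) * ∑ n ∈ Finset.Icc 1 k, ρ n with he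
  have hMk : ∀ k : ℕ, M (τ ^ k) = τ ^ (e k) := hM.2.1
  have hρb : ∀ n : ℕ, 1 ≤ n → 0 ≤ ρ n ∧ ρ n ≤ 1 := by
    intro n hn
    by_cases h : ∃ m, 1 ≤ m ∧ nk m = n
    · obtain ⟨m, hm, hmn⟩ := h
      rw [← hmn, hρ0 m hm]; norm_num
    · push_neg at h
      rw [hρ1 n h]; norm_num
  have estep : ∀ k : ℕ, e (k + 1) = e k + (r + (p - r) * ρ (k + 1)) := by
    intro k
    simp only [he]
    rw [Finset.sum_Icc_succ_top (by omega : 1 ≤ k + 1)]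
    push_cast; ring
  have emono1 : ∀ k : ℕ, e k ≤ e (k + 1) := by
    intro k
    have hb := hρb (k + 1) (by omega)
    rw [estep k]; nlinarith
  have ep : ∀ k : ℕ, e (k + 1) ≤ e k + p := by
    intro k
    have hb := hρb (k + 1) (by omega)
    rw [estep k]; nlinarith
  have emono : ∀ a b : ℕ, a ≤ b → e a ≤ e b := by
    intro a b hab
    induction b, hab using Nat.le_induction with
    | base => exact le_rfl
    | succ b hb ih => exact ih.trans (emono1 b)
  have hIcc : ∀ x : ℕ, Finset.Icc 1 x = Finset.Ioc 0 x := fun x => Finset.Icc_add_one_left_eq_Ioc 0 x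
  have esuper : ∀ a b : ℕ, e a + e b ≤ e (a + b) := by
    intro a b
    have hs := sum_super hnk1 hmono hgap hρ0 hρ1 a b
    have hsplit : (∑ n ∈ Finset.Ioc 0 a, ρ n) + ∑ n ∈ Finset.Ioc a (a + b), ρ n
        = ∑ n ∈ Finset.Ioc 0 (a + b), ρ n :=
      Finset.sum_Ioc_consecutive _ (Nat.zero_le a) (Nat.le_add_right a b)
    simp only [he, hIcc]
    push_cast
    nlinarith
  have hfind : ∀ x : ℝ, 0 < x → x ≤ 1 → ∃ k : ℕ, τ ^ (k + 1) < x ∧ x ≤ τ ^ k := by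
    intro x hx hx1
    have hex : ∃ n : ℕ, τ ^ n < x := exists_pow_lt_of_lt_one hx hτ1
    have hm : τ ^ (Nat.find hex) < x := Nat.find_spec hex
    have hm0 : Nat.find hex ≠ 0 := by
      intro h; rw [h, pow_zero] at hm; linarith
    refine ⟨Nat.find hex - 1, ?_, ?_⟩
    · rw [show Nat.find hex - 1 + 1 = Nat.find hex by omega]; exact hm
    · by_contra hc; push_neg at hc
      exact (Nat.find_min hex (show Nat.find hex - 1 < Nat.find hex by omega)) hc
  have hMint : ∀ (k : ℕ) (x : ℝ), τ ^ (k + 1) ≤ x → x ≤ τ ^ k →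
      τ ^ (e (k + 1)) ≤ M x ∧ M x ≤ τ ^ (e k) := by
    intro k x h1 h2
    have hform := hM.2.2 k x ⟨h1, h2⟩
    rw [hform, hMk (k + 1), hMk k]
    have hab : τ ^ (e (k + 1)) ≤ τ ^ (e k) :=
      Real.rpow_le_rpow_of_exponent_ge hτ0 hτ1.le (emono1 k)
    have hΔ : (0 : ℝ) < τ ^ k - τ ^ (k + 1) := by
      have := pow_lt_pow_right_of_lt_one₀ hτ0 hτ1 (by omega : k < k + 1)
      linarith
    constructor
    · have : 0 ≤ (x - τ ^ (k + 1)) * (τ ^ (e k) - τ ^ (e (k + 1))) / (τ ^ k - τ ^ (k + 1)) :=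
        div_nonneg (mul_nonneg (by linarith) (by linarith)) hΔ.le
      linarith
    · have hle : (x - τ ^ (k + 1)) * (τ ^ (e k) - τ ^ (e (k + 1))) / (τ ^ k - τ ^ (k + 1))
          ≤ τ ^ (e k) - τ ^ (e (k + 1)) := by
        rw [div_le_iff₀ hΔ]
        nlinarith
      linarith
  have hMle : ∀ (m : ℕ) (x : ℝ), 0 < x → x ≤ τ ^ m → M x ≤ τ ^ (e m) := by
    intro m x hx hxm
    obtain ⟨k, hk1, hk2⟩ := hfind x hx (hxm.trans (pow_le_one₀ hτ0.le hτ1.le))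
    have hkm : m ≤ k := by
      by_contra h; push_neg at h
      have : τ ^ m ≤ τ ^ (k + 1) := pow_le_pow_of_le_one hτ0.le hτ1.le (by omega)
      linarith
    exact ((hMint k x hk1.le hk2).2).trans
      (Real.rpow_le_rpow_of_exponent_ge hτ0 hτ1.le (emono m k hkm))
  obtain ⟨j, hj1, hj2⟩ := hfind lam hl0 hl1.le
  have hMlam_lb := (hMint j lam hj1.le hj2).1
  have hMlam_pos : 0 < M lam := lt_of_lt_of_le (Real.rpow_pos_of_pos hτ0 _) hMlam_lb
  rw [div_le_iff₀ hMlam_pos]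
  rcases eq_or_lt_of_le ht0 with h0 | ht0'
  · rw [← h0, mul_zero, hM.1, mul_zero, zero_mul]
  · obtain ⟨k, hk1, hk2⟩ := hfind t ht0' ht1
    have hMt_lb := (hMint k t hk1.le hk2).1
    have hlam_t : lam * t ≤ τ ^ (j + k) := by
      calc lam * t ≤ τ ^ j * τ ^ k :=
            mul_le_mul hj2 hk2 ht0'.le (pow_nonneg hτ0.le j)
        _ = τ ^ (j + k) := (pow_add τ j k).symm
    have hMlt : M (lam * t) ≤ τ ^ (e (j + k)) := hMle (j + k) (lam * t) (mul_pos hl0 ht0') hlam_t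
    have h5 : τ ^ (e (j + k)) ≤ τ ^ (e j + e k) :=
      Real.rpow_le_rpow_of_exponent_ge hτ0 hτ1.le (esuper j k)
    have hMt_lb' : τ ^ (e k + p) ≤ M t :=
      le_trans (Real.rpow_le_rpow_of_exponent_ge hτ0 hτ1.le (ep k)) hMt_lb
    have hMlam_lb' : τ ^ (e j + p) ≤ M lam :=
      le_trans (Real.rpow_le_rpow_of_exponent_ge hτ0 hτ1.le (ep j)) hMlam_lb
    have hkey : τ ^ (e j + e k) = τ ^ (-(2 * p)) * τ ^ (e k + p) * τ ^ (e j + p) := by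
      rw [← Real.rpow_add hτ0, ← Real.rpow_add hτ0]
      congr 1; ring
    calc M (lam * t) ≤ τ ^ (e j + e k) := hMlt.trans h5
      _ = τ ^ (-(2 * p)) * τ ^ (e k + p) * τ ^ (e j + p) := hkey
      _ ≤ τ ^ (-(2 * p)) * M t * M lam := by
          have p1 : (0:ℝ) < τ ^ (-(2 * p)) := Real.rpow_pos_of_pos hτ0 _
          have p2 : (0:ℝ) < τ ^ (e k + p) := Real.rpow_pos_of_pos hτ0 _
          have p3 : (0:ℝ) < τ ^ (e j + p) := Real.rpow_pos_of_pos hτ0 _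
          have step1 : τ ^ (e k + p) * τ ^ (e j + p) ≤ M t * M lam :=
            mul_le_mul hMt_lb' hMlam_lb' p3.le (p2.le.trans hMt_lb')
          rw [mul_assoc, mul_assoc]
          exact mul_le_mul_of_nonneg_left step1 p1.le


/-- inequality (3.2) in the proof of Lemma 3.8. Every
`N ∈ C_{M,1}` — the closed convex hull in `C([0,1])` of the closure of
`{ t ↦ M(λ t)/M(λ) : 0 < λ < 1 }` — satisfies `N t ≤ τ^(-2p) M t` for `t ∈ [0,1]`. -/
theorem statement10 (τ r p : ℝ) (hτ0 : 0 < τ) (hτ1 : τ < 1) (hr : 1 < r) (hrp : r < p)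
    (h1 : τ ^ (r - 1) * (1 - τ ^ p) ≤ 1 - τ ^ r)
    (h2 : τ ^ (p - 1) * (1 - τ ^ r) ≤ 1 - τ ^ p)
    (nk : ℕ → ℕ) (hnk1 : nk 1 = 1)
    (hmono : ∀ k : ℕ, 1 ≤ k → nk k < nk (k + 1))
    (hgap : ∀ k : ℕ, 1 ≤ k → nk (k + 1) - nk k ≤ nk (k + 2) - nk (k + 1))
    (hgap' : Filter.Tendsto (fun k => nk (k + 1) - nk k) Filter.atTop Filter.atTop)
    (ρ : ℕ → ℝ)
    (hρ0 : ∀ k : ℕ, 1 ≤ k → ρ (nk k) = 0)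
    (hρ1 : ∀ i : ℕ, (∀ k : ℕ, 1 ≤ k → nk k ≠ i) → ρ i = 1)
    (M : ℝ → ℝ) (hM : IsMeta τ r p ρ M) :
    ∀ N : C(Set.Icc (0 : ℝ) 1, ℝ),
      N ∈ closure (convexHull ℝ (closure
        {f : C(Set.Icc (0 : ℝ) 1, ℝ) | ∃ lam : ℝ, 0 < lam ∧ lam < 1 ∧
          ∀ t : Set.Icc (0 : ℝ) 1, f t = M (lam * (t : ℝ)) / M lam})) →
      ∀ t : Set.Icc (0 : ℝ) 1, N t ≤ τ ^ (-(2 * p)) * M (t : ℝ) := by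
  intro N hN t
  set g : Set.Icc (0 : ℝ) 1 → ℝ := fun s => τ ^ (-(2 * p)) * M (s : ℝ) with hg
  set K : Set C(Set.Icc (0 : ℝ) 1, ℝ) :=
    {f | ∀ s : Set.Icc (0 : ℝ) 1, f s ≤ g s} with hK
  have hKclosed : IsClosed K := by
    have hrw : K = ⋂ s : Set.Icc (0 : ℝ) 1,
        {f : C(Set.Icc (0 : ℝ) 1, ℝ) | f s ≤ g s} := by
      ext f; simp [hK, Set.mem_iInter]
    rw [hrw]
    exact isClosed_iInter fun s =>
      isClosed_le (continuous_eval_const s) continuous_const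
  have hKconvex : Convex ℝ K := by
    intro f hf f' hf' a b ha hb hab
    simp only [hK, Set.mem_setOf_eq] at hf hf' ⊢
    intro s
    have hval : (a • f + b • f') s = a * f s + b * f' s := by
      simp
    rw [hval]
    calc a * f s + b * f' s ≤ a * g s + b * g s :=
          add_le_add (mul_le_mul_of_nonneg_left (hf s) ha)
            (mul_le_mul_of_nonneg_left (hf' s) hb)
      _ = g s := by rw [← add_mul, hab, one_mul]
  have hbase : {f : C(Set.Icc (0 : ℝ) 1, ℝ) | ∃ lam : ℝ, 0 < lam ∧ lam < 1 ∧
      ∀ s : Set.Icc (0 : ℝ) 1, f s = M (lam * (s : ℝ)) / M lam} ⊆ K := by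
    rintro f ⟨lam, hl0, hl1, hf⟩
    simp only [hK, Set.mem_setOf_eq]
    intro s
    rw [hf s]
    exact genbound τ r p hτ0 hτ1 hr hrp nk hnk1 hmono hgap ρ hρ0 hρ1 M hM
      lam (s : ℝ) hl0 hl1 s.2.1 s.2.2
  have hc1 := closure_minimal hbase hKclosed
  have hc2 := convexHull_min hc1 hKconvex
  have hc3 := closure_minimal hc2 hKclosed
  exact hc3 hN t
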